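/- Given a real sequence (β_t)_{t≥0} with β₀ = 1 and β_t ∈ (0, 1] for t ≥ 1, define for 0 ≤ j ≤ t the weights θ_j^{(t)} = β_j ∏_{i=j+1}^{t} (1 − β_i), with θ_t^{(t)} = β_t. Let (z_t)_{t≥1} ⊂ ℝ^p and define x₁ = z₁ and x_{t+1} = (1 − β_t) x_t + β_t z_{t+1} for t ≥ 1. Set ℱ_t = ∑_{j=0}^{t−1} θ_j^{(t−1)} ‖x_t − z_{j+1}‖. Then for every t ≥ 2: ℱ_t ≤ (1 − β_{t−1})(ℱ_{t−1} + 2‖x_t − x_{t−1}‖), and consequently ℱ_t² ≤ (1 − β_{t−1}) ℱ_{t−1}² + (4/β_{t−1}) ‖x_t − x_{t−1}‖². -/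

import Mathlib

open Finset

theorem stmt_7 (p : ℕ) (β : ℕ → ℝ) (hβ0 : β 0 = 1)
    (hβ : ∀ t : ℕ, 1 ≤ t → 0 < β t ∧ β t ≤ 1)
    (z x : ℕ → EuclideanSpace ℝ (Fin p))
    (hx1 : x 1 = z 1)
    (hxrec : ∀ t : ℕ, 1 ≤ t → x (t + 1) = (1 - β t) • x t + β t • z (t + 1))
    (t : ℕ) (ht : 2 ≤ t) :
    (∑ j ∈ Finset.range t,
        (β j * ∏ i ∈ Finset.Ioc j (t - 1), (1 - β i)) * ‖x t - z (j + 1)‖) ≤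
      (1 - β (t - 1)) *
        ((∑ j ∈ Finset.range (t - 1),
            (β j * ∏ i ∈ Finset.Ioc j (t - 2), (1 - β i)) * ‖x (t - 1) - z (j + 1)‖)
          + 2 * ‖x t - x (t - 1)‖) ∧
    (∑ j ∈ Finset.range t,
        (β j * ∏ i ∈ Finset.Ioc j (t - 1), (1 - β i)) * ‖x t - z (j + 1)‖) ^ 2 ≤
      (1 - β (t - 1)) *
          (∑ j ∈ Finset.range (t - 1),
              (β j * ∏ i ∈ Finset.Ioc j (t - 2), (1 - β i)) * ‖x (t - 1) - z (j + 1)‖) ^ 2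
        + (4 / β (t - 1)) * ‖x t - x (t - 1)‖ ^ 2 := by
  obtain ⟨u, rfl⟩ : ∃ u, t = u + 2 := ⟨t - 2, by omega⟩
  have e1 : u + 2 - 1 = u + 1 := rfl
  have e2 : u + 2 - 2 = u := rfl
  rw [e1, e2]
  have hβnn : ∀ j, 0 ≤ β j := by
    intro j
    rcases Nat.eq_zero_or_pos j with h | h
    · simp [h, hβ0]
    · exact (hβ j h).1.le
  have hθnn : ∀ j s : ℕ, 0 ≤ β j * ∏ i ∈ Ioc j s, (1 - β i) := by
    intro j s
    refine mul_nonneg (hβnn j) (Finset.prod_nonneg fun i hi => ?_)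
    have h1 : 1 ≤ i := by have := (mem_Ioc.mp hi).1; omega
    linarith [(hβ i h1).2]
  -- the weights sum to 1
  have hsum : ∀ s : ℕ, (∑ j ∈ range (s + 1), β j * ∏ i ∈ Ioc j s, (1 - β i)) = 1 := by
    intro s
    induction s with
    | zero => simp [hβ0]
    | succ n ih =>
      have step : ∀ j ∈ range (n + 1),
          β j * ∏ i ∈ Ioc j (n + 1), (1 - β i)
            = (1 - β (n + 1)) * (β j * ∏ i ∈ Ioc j n, (1 - β i)) := by
        intro j hj
        rw [Finset.prod_Ioc_succ_top (Nat.lt_succ_iff.mp (mem_range.mp hj))]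
        ring
      rw [Finset.sum_range_succ, Finset.sum_congr rfl step, ← Finset.mul_sum, ih]
      simp
  set b : ℝ := β (u + 1) with hb
  obtain ⟨hbpos, hble⟩ := hβ (u + 1) (by omega)
  set D : ℝ := ‖x (u + 2) - x (u + 1)‖ with hD
  set F' : ℝ := ∑ j ∈ range (u + 1),
      (β j * ∏ i ∈ Ioc j u, (1 - β i)) * ‖x (u + 1) - z (j + 1)‖ with hF'
  have hF'nn : 0 ≤ F' :=
    Finset.sum_nonneg fun j _ => mul_nonneg (hθnn j u) (norm_nonneg _)
  have hDnn : 0 ≤ D := norm_nonneg _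
  have hx : x (u + 2) = (1 - b) • x (u + 1) + b • z (u + 2) := hxrec (u + 1) (by omega)
  -- the last term
  have hlastv : x (u + 2) - z (u + 2) = (1 - b) • (x (u + 1) - z (u + 2)) := by
    rw [hx]; module
  have hdiffv : x (u + 2) - x (u + 1) = b • (z (u + 2) - x (u + 1)) := by
    rw [hx]; module
  have hDval : D = b * ‖z (u + 2) - x (u + 1)‖ := by
    rw [hD, hdiffv, norm_smul, Real.norm_eq_abs, abs_of_pos hbpos]
  have hlast : b * ‖x (u + 2) - z (u + 2)‖ = (1 - b) * D := by
    rw [hlastv, norm_smul, Real.norm_eq_abs, abs_of_nonneg (by linarith), norm_sub_rev, hDval]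
    ring
  -- term-by-term bound
  have hterm : ∀ j ∈ range (u + 1),
      (β j * ∏ i ∈ Ioc j (u + 1), (1 - β i)) * ‖x (u + 2) - z (j + 1)‖
        ≤ (1 - b) * ((β j * ∏ i ∈ Ioc j u, (1 - β i)) * ‖x (u + 1) - z (j + 1)‖
            + (β j * ∏ i ∈ Ioc j u, (1 - β i)) * D) := by
    intro j hj
    rw [Finset.prod_Ioc_succ_top (Nat.lt_succ_iff.mp (mem_range.mp hj))]
    have htri : ‖x (u + 2) - z (j + 1)‖ ≤ ‖x (u + 1) - z (j + 1)‖ + D := by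
      calc ‖x (u + 2) - z (j + 1)‖
          = ‖(x (u + 1) - z (j + 1)) + (x (u + 2) - x (u + 1))‖ := by abel_nf
        _ ≤ ‖x (u + 1) - z (j + 1)‖ + D := norm_add_le _ _
    have hθ := hθnn j u
    nlinarith [norm_nonneg (x (u + 2) - z (j + 1)), mul_le_mul_of_nonneg_left htri
      (mul_nonneg hθ (by linarith : (0:ℝ) ≤ 1 - b))]
  -- first inequality
  have hfirst : (∑ j ∈ range (u + 2),
      (β j * ∏ i ∈ Ioc j (u + 1), (1 - β i)) * ‖x (u + 2) - z (j + 1)‖)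
        ≤ (1 - b) * (F' + 2 * D) := by
    rw [Finset.sum_range_succ]
    have hlastterm : (β (u + 1) * ∏ i ∈ Ioc (u + 1) (u + 1), (1 - β i)) *
        ‖x (u + 2) - z (u + 1 + 1)‖ = (1 - b) * D := by
      rw [Finset.Ioc_self, Finset.prod_empty, mul_one, ← hb]
      exact hlast
    rw [hlastterm]
    have h1 : (∑ j ∈ range (u + 1),
        (β j * ∏ i ∈ Ioc j (u + 1), (1 - β i)) * ‖x (u + 2) - z (j + 1)‖)
          ≤ (1 - b) * (F' + D) := by
      calc (∑ j ∈ range (u + 1),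
          (β j * ∏ i ∈ Ioc j (u + 1), (1 - β i)) * ‖x (u + 2) - z (j + 1)‖)
          ≤ ∑ j ∈ range (u + 1), (1 - b) *
              ((β j * ∏ i ∈ Ioc j u, (1 - β i)) * ‖x (u + 1) - z (j + 1)‖
                + (β j * ∏ i ∈ Ioc j u, (1 - β i)) * D) :=
            Finset.sum_le_sum hterm
        _ = (1 - b) * (F' + (∑ j ∈ range (u + 1), β j * ∏ i ∈ Ioc j u, (1 - β i)) * D) := by
            rw [← Finset.mul_sum, Finset.sum_add_distrib, ← Finset.sum_mul, hF']
        _ = (1 - b) * (F' + D) := by rw [hsum u, one_mul]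
    linarith
  refine ⟨hfirst, ?_⟩
  have hFnn : 0 ≤ ∑ j ∈ range (u + 2),
      (β j * ∏ i ∈ Ioc j (u + 1), (1 - β i)) * ‖x (u + 2) - z (j + 1)‖ :=
    Finset.sum_nonneg fun j _ => mul_nonneg (hθnn j (u + 1)) (norm_nonneg _)
  have hsq : (∑ j ∈ range (u + 2),
      (β j * ∏ i ∈ Ioc j (u + 1), (1 - β i)) * ‖x (u + 2) - z (j + 1)‖) ^ 2
        ≤ ((1 - b) * (F' + 2 * D)) ^ 2 := by
    apply pow_le_pow_left₀ hFnn hfirst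
  have key : b * (((1 - b) * (F' + 2 * D)) ^ 2) ≤ b * ((1 - b) * F' ^ 2 + 4 / b * D ^ 2) := by
    have hbd : b * ((1 - b) * F' ^ 2 + 4 / b * D ^ 2) = b * ((1 - b) * F' ^ 2) + 4 * D ^ 2 := by
      have hb0 : b ≠ 0 := hbpos.ne'
      field_simp
    rw [hbd]
    have hid : b * ((1 - b) * F' ^ 2) + 4 * D ^ 2 - b * ((1 - b) * (F' + 2 * D)) ^ 2
        = ((1 - b) * (b * F' - 2 * D)) ^ 2 + b ^ 3 * (1 - b) * F' ^ 2
          + 4 * ((b + b ^ 2 - b ^ 3) * D ^ 2) := by ring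
    have h1 : (0:ℝ) ≤ ((1 - b) * (b * F' - 2 * D)) ^ 2 := sq_nonneg _
    have h2 : (0:ℝ) ≤ b ^ 3 * (1 - b) * F' ^ 2 :=
      mul_nonneg (mul_nonneg (pow_nonneg hbpos.le 3) (by linarith)) (sq_nonneg F')
    have h3 : (0:ℝ) ≤ (b + b ^ 2 - b ^ 3) * D ^ 2 := by
      have : (0:ℝ) ≤ b + b ^ 2 - b ^ 3 := by nlinarith [sq_nonneg b, hbpos.le, hble]
      exact mul_nonneg this (sq_nonneg D)
    linarith
  have := le_of_mul_le_mul_left key hbpos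
  linarith [hsq]
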